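/- Let φ_1,…,φ_r be symmetric polynomials of the shape φ_j(z) = a_j σ_{k_j}(z) − Υ_j(σ_{l_1}(z),…,σ_{l_R}(z)) with a_j nonzero integers, Υ_j ∈ ℤ[s_1,…,s_R], and degrees k_1,…,k_r satisfying 1 ≤ k_1 < k_2 < … < k_r = k. Then for each ε > 0, the number of non-diagonal solutions, i.e. pairs (x,y) with 1 ≤ x_i, y_i ≤ X satisfying φ_j(x) = φ_j(y) (1 ≤ j ≤ r) for which there exists an index j with 1 ≤ j ≤ k such that y_j ∉ {x_1,…,x_k} or x_j ∉ {y_1,…,y_k}, is O(X^{2w(φ)+1+ε}). -/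

import Mathlib

open Finset Asymptotics Filter

/-- The elementary symmetric polynomial `σ_l` evaluated at the integer tuple `x`. -/
def esymm (k l : ℕ) (x : Fin k → ℤ) : ℤ :=
  ∑ s ∈ Finset.powersetCard l (Finset.univ : Finset (Fin k)), ∏ i ∈ s, x i

/-- The number of pairs `(x, y)` of integer `k`-tuples with all entries in `[1, X]`
satisfying the relation `P`. -/
noncomputable def pairCount (k X : ℕ) (P : (Fin k → ℤ) → (Fin k → ℤ) → Prop) : ℕ :=
  Nat.card {p : (Fin k → ℤ) × (Fin k → ℤ) //
    (∀ i, 1 ≤ p.1 i ∧ p.1 i ≤ (X : ℤ)) ∧ (∀ i, 1 ≤ p.2 i ∧ p.2 i ≤ (X : ℤ)) ∧ P p.1 p.2}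

/-- `T_k(X)`: the number of pairs `(x, y)` of integer `k`-tuples with entries in `[1, X]`
for which `y` is a permutation of `x`. -/
noncomputable def permCount (k X : ℕ) : ℕ :=
  pairCount k X (fun x y => ∃ π : Equiv.Perm (Fin k), y = x ∘ π)

/-- The complementary set of exponents `ℛ = {1,…,k} \ {k_1,…,k_r}`. -/
def compSet (k r : ℕ) (kk : Fin r → ℕ) : Finset ℕ :=
  Finset.Icc 1 k \ Finset.image kk Finset.univ

lemma ND_esymm_zero (k : ℕ) (x : Fin k → ℤ) : esymm k 0 x = 1 := by
  simp [esymm]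

lemma ND_vieta (k : ℕ) (z : Fin k → ℤ) (c : ℤ) :
    ∏ m, (z m + c) = ∑ l ∈ Finset.range (k+1), esymm k l z * c^(k-l) := by
  classical
  rw [Finset.prod_add]
  have hmap : ∀ t ∈ (Finset.univ : Finset (Fin k)).powerset, t.card ∈ Finset.range (k+1) := by
    intro t ht
    simp only [Finset.mem_range, Nat.lt_succ_iff]
    simpa using Finset.card_le_card (Finset.mem_powerset.mp ht)
  rw [← Finset.sum_fiberwise_of_maps_to hmap]
  refine Finset.sum_congr rfl fun l _ => ?_
  rw [esymm, Finset.sum_mul, powersetCard_eq_filter]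
  refine Finset.sum_congr rfl fun t ht => ?_
  have ht' := (Finset.mem_filter.mp ht).2
  rw [Finset.prod_const, Finset.card_sdiff_of_subset (Finset.subset_univ t), Finset.card_univ,
    Fintype.card_fin, ht']

lemma ND_esymm_abs_le (k : ℕ) (X : ℕ) (x : Fin k → ℤ) (hx : ∀ i, 1 ≤ x i ∧ x i ≤ (X:ℤ))
    (l : ℕ) : |esymm k l x| ≤ (k.choose l : ℤ) * (X:ℤ)^l := by
  calc |esymm k l x| ≤ ∑ s ∈ Finset.powersetCard l (Finset.univ : Finset (Fin k)), |∏ i ∈ s, x i| :=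
        Finset.abs_sum_le_sum_abs _ _
    _ ≤ ∑ s ∈ Finset.powersetCard l (Finset.univ : Finset (Fin k)), (X:ℤ)^l := by
        refine Finset.sum_le_sum fun s hs => ?_
        rw [abs_prod]
        have hcard := (Finset.mem_powersetCard.mp hs).2
        calc ∏ i ∈ s, |x i| ≤ ∏ i ∈ s, (X:ℤ) := by
              refine Finset.prod_le_prod (fun i _ => abs_nonneg _) fun i _ => ?_
              rw [abs_le]
              exact ⟨le_trans (by linarith [(hx i).1]) (hx i).1, (hx i).2⟩
          _ = (X:ℤ)^l := by rw [Finset.prod_const, hcard]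
    _ = (k.choose l : ℤ) * (X:ℤ)^l := by
        rw [Finset.sum_const, Finset.card_powersetCard, Finset.card_univ, Fintype.card_fin,
          nsmul_eq_mul]

lemma ND_root_count (k : ℕ) (e : ℕ → ℤ) :
    ∃ F : Finset ℤ, F.card ≤ k ∧ ∀ v : ℤ,
      (-v)^k + ∑ l ∈ Finset.Icc 1 k, e l * (-v)^(k-l) = 0 → v ∈ F := by
  classical
  set Q : Polynomial ℤ := Polynomial.C ((-1:ℤ)^k) * Polynomial.X^k
      + ∑ l ∈ Finset.Icc 1 k, Polynomial.C (e l * (-1:ℤ)^(k-l)) * Polynomial.X^(k-l) with hQ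
  have heval : ∀ v : ℤ, Q.eval v = (-v)^k + ∑ l ∈ Finset.Icc 1 k, e l * (-v)^(k-l) := by
    intro v
    simp only [hQ, Polynomial.eval_add, Polynomial.eval_mul, Polynomial.eval_C,
      Polynomial.eval_pow, Polynomial.eval_X, Polynomial.eval_finset_sum]
    rw [show -v = -1 * v by ring, mul_pow]
    refine congrArg _ (Finset.sum_congr rfl fun l _ => ?_)
    rw [mul_pow]
    ring
  have hQne : Q ≠ 0 := by
    intro h
    have hc : Q.coeff k = (-1:ℤ)^k := by
      simp only [hQ, Polynomial.coeff_add, Polynomial.coeff_C_mul, Polynomial.coeff_X_pow,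
        Polynomial.finset_sum_coeff]
      rw [if_pos trivial, mul_one]
      have h0 : ∀ l ∈ Finset.Icc 1 k, e l * (-1:ℤ)^(k-l) * (if k = k - l then 1 else 0) = 0 := by
        intro l hl
        have h1 : 1 ≤ l := (Finset.mem_Icc.mp hl).1
        have h2 : l ≤ k := (Finset.mem_Icc.mp hl).2
        rw [if_neg (by omega), mul_zero]
      rw [Finset.sum_congr rfl h0, Finset.sum_const_zero, add_zero]
    rw [h, Polynomial.coeff_zero] at hc
    rcases neg_one_pow_eq_or ℤ k with h' | h' <;> rw [h'] at hc <;> norm_num at hc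
  have hdeg : Q.natDegree ≤ k := by
    refine le_trans (Polynomial.natDegree_add_le _ _) (max_le ?_ ?_)
    · exact le_trans (Polynomial.natDegree_C_mul_le _ _) (le_of_eq (Polynomial.natDegree_X_pow k))
    · refine Polynomial.natDegree_sum_le_of_forall_le _ _ fun l _ => ?_
      exact le_trans (Polynomial.natDegree_C_mul_le _ _)
        (le_trans (le_of_eq (Polynomial.natDegree_X_pow _)) (Nat.sub_le k l))
  refine ⟨Q.roots.toFinset, le_trans (Multiset.toFinset_card_le _)
    (le_trans (Polynomial.card_roots' Q) hdeg), fun v hv => ?_⟩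
  rw [Multiset.mem_toFinset, Polynomial.mem_roots hQne]
  rw [Polynomial.IsRoot, heval]
  exact hv


lemma ND_divisor_bound (δ : ℝ) (hδ : 0 < δ) :
    ∃ C : ℝ, 1 ≤ C ∧ ∀ n : ℕ, n ≠ 0 → (n.divisors.card : ℝ) ≤ C * (n:ℝ)^δ := by
  obtain ⟨M, hM1, hMδ⟩ : ∃ M : ℕ, 1 ≤ M ∧ 1/δ ≤ (M:ℝ) :=
    ⟨max 1 ⌈1/δ⌉₊, le_max_left _ _,
      le_trans (Nat.le_ceil _) (by exact_mod_cast le_max_right 1 ⌈1/δ⌉₊)⟩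
  have hδM : 1 ≤ δ * (M:ℝ) := by
    rw [div_le_iff₀ hδ] at hMδ
    linarith
  have hMR : (1:ℝ) ≤ (M:ℝ) := by exact_mod_cast hM1
  refine ⟨(M:ℝ)^(2^M), one_le_pow₀ hMR, fun n hn => ?_⟩
  have key : ∀ p ∈ n.primeFactors,
      ((n.factorization p + 1 : ℕ):ℝ) ≤
        (if p ≤ 2^M then (M:ℝ) else 1) * (p:ℝ)^((n.factorization p : ℝ) * δ) := by
    intro p hp
    have hp2 : 2 ≤ p := (Nat.prime_of_mem_primeFactors hp).two_le
    have hp2R : (2:ℝ) ≤ (p:ℝ) := by exact_mod_cast hp2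
    set a := n.factorization p with ha
    have haδ : (0:ℝ) ≤ (a:ℝ) * δ := mul_nonneg (Nat.cast_nonneg a) hδ.le
    by_cases hps : p ≤ 2^M
    · rw [if_pos hps]
      have h1 : (a:ℕ) + 1 ≤ M * (a / M + 1) := Nat.succ_le_of_lt (Nat.lt_mul_div_succ a hM1)
      have h2 : (a / M + 1 : ℕ) ≤ 2^(a/M) := Nat.lt_two_pow_self (n := a/M)
      have h3 : ((a/M : ℕ):ℝ) ≤ (a:ℝ) * δ := by
        calc ((a/M : ℕ):ℝ) ≤ (a:ℝ)/(M:ℝ) := Nat.cast_div_le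
          _ = (a:ℝ) * (1/(M:ℝ)) := by ring
          _ ≤ (a:ℝ) * δ := by
              refine mul_le_mul_of_nonneg_left ?_ (Nat.cast_nonneg a)
              rw [div_le_iff₀ (by linarith : (0:ℝ) < (M:ℝ))]
              calc (1:ℝ) ≤ δ * M := hδM
                _ = δ * M := rfl
      calc ((a + 1 : ℕ):ℝ) ≤ (M:ℝ) * ((2:ℝ)^(a/M : ℕ)) := by
            have : ((a+1:ℕ):ℝ) ≤ ((M * (2^(a/M)) : ℕ):ℝ) := by
              exact_mod_cast le_trans h1 (Nat.mul_le_mul_left M h2)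
            simpa using this
        _ ≤ (M:ℝ) * (p:ℝ)^((a:ℝ)*δ) := by
            refine mul_le_mul_of_nonneg_left ?_ (by linarith)
            calc (2:ℝ)^(a/M : ℕ) = (2:ℝ)^(((a/M : ℕ)):ℝ) := by
                  rw [Real.rpow_natCast]
              _ ≤ (2:ℝ)^((a:ℝ)*δ) := Real.rpow_le_rpow_of_exponent_le one_le_two h3
              _ ≤ (p:ℝ)^((a:ℝ)*δ) := Real.rpow_le_rpow (by norm_num) hp2R haδ
    · rw [if_neg hps, one_mul]
      have hplarge : (2:ℝ) ≤ (p:ℝ)^δ := by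
        have h2M : (2:ℝ)^(M:ℕ) ≤ (p:ℝ) := by
          have : 2^M ≤ p := by omega
          exact_mod_cast this
        calc (2:ℝ) = (2:ℝ)^(1:ℝ) := (Real.rpow_one 2).symm
          _ ≤ (2:ℝ)^((M:ℝ)*δ) := Real.rpow_le_rpow_of_exponent_le one_le_two (by linarith)
          _ = ((2:ℝ)^(M:ℕ))^δ := by
              rw [← Real.rpow_natCast 2 M, ← Real.rpow_mul (by norm_num)]
          _ ≤ (p:ℝ)^δ := Real.rpow_le_rpow (by positivity) h2M hδ.le
      calc ((a + 1 : ℕ):ℝ) ≤ (2:ℝ)^(a:ℕ) := by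
            have := Nat.lt_two_pow_self (n := a)
            exact_mod_cast this
        _ ≤ ((p:ℝ)^δ)^(a:ℕ) := pow_le_pow_left₀ (by norm_num) hplarge a
        _ = (p:ℝ)^((a:ℝ)*δ) := by
            rw [← Real.rpow_natCast ((p:ℝ)^δ) a, ← Real.rpow_mul (Nat.cast_nonneg p),
              mul_comm δ (a:ℝ)]
  calc (n.divisors.card : ℝ)
      = ∏ p ∈ n.primeFactors, ((n.factorization p + 1 : ℕ):ℝ) := by
        rw [Nat.card_divisors hn]
        push_cast
        rfl
    _ ≤ ∏ p ∈ n.primeFactors,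
        (if p ≤ 2^M then (M:ℝ) else 1) * (p:ℝ)^((n.factorization p : ℝ) * δ) :=
        Finset.prod_le_prod (fun p _ => by positivity) key
    _ = (∏ p ∈ n.primeFactors, (if p ≤ 2^M then (M:ℝ) else 1)) *
        ∏ p ∈ n.primeFactors, (p:ℝ)^((n.factorization p : ℝ) * δ) :=
        Finset.prod_mul_distrib
    _ ≤ (M:ℝ)^(2^M) * (n:ℝ)^δ := by
        refine mul_le_mul ?_ ?_ (by positivity) (by positivity)
        · rw [← Finset.prod_filter]
          rw [Finset.prod_const]
          have hsub : (n.primeFactors.filter (fun p => p ≤ 2^M)) ⊆ Finset.Icc 1 (2^M) := by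
            intro p hp
            rw [Finset.mem_filter] at hp
            rw [Finset.mem_Icc]
            exact ⟨(Nat.prime_of_mem_primeFactors hp.1).one_lt.le, hp.2⟩
          have hcard : (n.primeFactors.filter (fun p => p ≤ 2^M)).card ≤ 2^M := by
            calc _ ≤ (Finset.Icc 1 (2^M)).card := Finset.card_le_card hsub
              _ = 2^M := by rw [Nat.card_Icc]; exact Nat.succ_sub_one _
          exact pow_le_pow_right₀ hMR hcard
        · have hprod : ∏ p ∈ n.primeFactors, p ^ n.factorization p = n := by
            rw [← Nat.support_factorization]
            exact Nat.factorization_prod_pow_eq_self hn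
          have step : ∀ p ∈ n.primeFactors,
              (p:ℝ)^((n.factorization p : ℝ) * δ) = (((p ^ n.factorization p : ℕ)):ℝ)^δ := by
            intro p _
            rw [Nat.cast_pow, ← Real.rpow_natCast (p:ℝ) (n.factorization p),
              ← Real.rpow_mul (Nat.cast_nonneg p)]
          rw [Finset.prod_congr rfl step,
            Real.finset_prod_rpow _ _ (fun p _ => by positivity) δ]
          rw [← Nat.cast_prod, hprod]


lemma ND_mvpoly_bound {σ : Type*} [Fintype σ] (ψ : MvPolynomial σ ℤ) :
    ∃ C : ℤ, 0 ≤ C ∧ ∀ (c : σ → ℤ) (S : ℤ), 1 ≤ S → (∀ i, |c i| ≤ S) →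
      |MvPolynomial.eval c ψ| ≤ C * S ^ ψ.totalDegree := by
  classical
  refine ⟨∑ d ∈ ψ.support, |ψ.coeff d|, Finset.sum_nonneg fun d _ => abs_nonneg _,
    fun c S hS hc => ?_⟩
  rw [MvPolynomial.eval_eq']
  calc |∑ d ∈ ψ.support, ψ.coeff d * ∏ i, c i ^ d i|
      ≤ ∑ d ∈ ψ.support, |ψ.coeff d * ∏ i, c i ^ d i| := Finset.abs_sum_le_sum_abs _ _
    _ ≤ ∑ d ∈ ψ.support, |ψ.coeff d| * S ^ ψ.totalDegree := by
        refine Finset.sum_le_sum fun d hd => ?_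
        rw [abs_mul]
        refine mul_le_mul_of_nonneg_left ?_ (abs_nonneg _)
        calc |∏ i, c i ^ d i| = ∏ i, |c i| ^ d i := by rw [abs_prod]; simp [abs_pow]
          _ ≤ ∏ i, S ^ d i := by
              refine Finset.prod_le_prod (fun i _ => by positivity) fun i _ =>
                pow_le_pow_left₀ (abs_nonneg _) (hc i) _
          _ = S ^ (∑ i, d i) := by rw [← Finset.prod_pow_eq_pow_sum]
          _ ≤ S ^ ψ.totalDegree := by
              refine pow_le_pow_right₀ hS ?_
              have : (∑ i, d i) = d.sum fun _ e => e := by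
                rw [Finsupp.sum_fintype _ _ (fun _ => rfl)]
              rw [this]
              exact MvPolynomial.le_totalDegree hd
    _ = (∑ d ∈ ψ.support, |ψ.coeff d|) * S ^ ψ.totalDegree := by rw [Finset.sum_mul]
section core

variable (k r : ℕ) (kk : Fin r → ℕ) (a : Fin r → ℤ)
  (Υ : Fin r → MvPolynomial {l // l ∈ compSet k r kk} ℤ)
  (φ : Fin r → (Fin k → ℤ) → ℤ)

open Classical in
noncomputable def ND_dcoef
    (c : ({l // l ∈ compSet k r kk} → ℤ) × ({l // l ∈ compSet k r kk} → ℤ)) (l : ℕ) : ℤ :=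
  if h : l ∈ compSet k r kk then c.1 ⟨l, h⟩ - c.2 ⟨l, h⟩
  else if h2 : ∃ j, kk j = l then
    (MvPolynomial.eval c.1 (Υ h2.choose) - MvPolynomial.eval c.2 (Υ h2.choose)) / a h2.choose
  else 0

noncomputable def ND_Nfun
    (c : ({l // l ∈ compSet k r kk} → ℤ) × ({l // l ∈ compSet k r kk} → ℤ)) (t : ℤ) : ℤ :=
  -∑ l ∈ Finset.Icc 1 k, ND_dcoef k r kk a Υ c l * (-t)^(k-l)

open Classical in
noncomputable def ND_f (p : (Fin k → ℤ) × (Fin k → ℤ)) :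
    ((({l // l ∈ compSet k r kk} → ℤ) × ({l // l ∈ compSet k r kk} → ℤ)) × (Bool × ℤ))
      × (Fin k → ℤ) :=
  if h : ∃ j, p.1 j ∉ Set.range p.2 then
    (((fun l => esymm k l.1 p.1, fun l => esymm k l.1 p.2), (true, p.1 h.choose)),
      fun m => p.2 m - p.1 h.choose)
  else if h2 : ∃ j, p.2 j ∉ Set.range p.1 then
    (((fun l => esymm k l.1 p.1, fun l => esymm k l.1 p.2), (false, p.2 h2.choose)),
      fun m => p.1 m - p.2 h2.choose)
  else (((fun l => esymm k l.1 p.1, fun l => esymm k l.1 p.2), (false, 0)), fun _ => 0)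

noncomputable def ND_box (X : ℕ) : Finset (Fin k → ℤ) :=
  Fintype.piFinset fun _ => Finset.Icc 1 (X:ℤ)

open Classical in
noncomputable def ND_sol (X : ℕ) : Finset ((Fin k → ℤ) × (Fin k → ℤ)) :=
  (ND_box k X ×ˢ ND_box k X).filter fun p =>
    (∀ j, φ j p.1 = φ j p.2) ∧ ∃ j : Fin k, p.2 j ∉ Set.range p.1 ∨ p.1 j ∉ Set.range p.2

noncomputable def ND_cxFin (X : ℕ) : Finset ({l // l ∈ compSet k r kk} → ℤ) :=
  Fintype.piFinset fun l =>
    Finset.Icc (-((k.choose l.1 : ℤ) * (X:ℤ)^l.1)) ((k.choose l.1 : ℤ) * (X:ℤ)^l.1)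

noncomputable def ND_BaseF (X : ℕ) :
    Finset ((({l // l ∈ compSet k r kk} → ℤ) × ({l // l ∈ compSet k r kk} → ℤ)) × (Bool × ℤ)) :=
  (ND_cxFin k r kk X ×ˢ ND_cxFin k r kk X) ×ˢ
    ((Finset.univ : Finset Bool) ×ˢ Finset.Icc (1:ℤ) (X:ℤ))

def ND_Dset (N : ℤ) : Finset ℤ :=
  N.natAbs.divisors.image (fun d : ℕ => (d:ℤ)) ∪ N.natAbs.divisors.image (fun d : ℕ => -(d:ℤ))

lemma ND_mem_Dset {d N : ℤ} (hdvd : d ∣ N) (hN : N ≠ 0) : d ∈ ND_Dset N := by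
  have h1 : d.natAbs ∈ N.natAbs.divisors :=
    Nat.mem_divisors.mpr ⟨Int.natAbs_dvd_natAbs.mpr hdvd, Int.natAbs_ne_zero.mpr hN⟩
  rcases Int.natAbs_eq d with h | h
  · exact Finset.mem_union_left _ (Finset.mem_image.mpr ⟨d.natAbs, h1, h.symm⟩)
  · exact Finset.mem_union_right _ (Finset.mem_image.mpr ⟨d.natAbs, h1, h.symm⟩)

lemma ND_Dset_card_le (N : ℤ) : (ND_Dset N).card ≤ 2 * N.natAbs.divisors.card := by
  refine le_trans (Finset.card_union_le _ _) ?_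
  have := Finset.card_image_le (s := N.natAbs.divisors) (f := fun d : ℕ => (d:ℤ))
  have := Finset.card_image_le (s := N.natAbs.divisors) (f := fun d : ℕ => -(d:ℤ))
  omega

end core

section ident

variable {k r : ℕ} {kk : Fin r → ℕ} {a : Fin r → ℤ}
  {Υ : Fin r → MvPolynomial {l // l ∈ compSet k r kk} ℤ}
  {φ : Fin r → (Fin k → ℤ) → ℤ}

lemma ND_dcoef_eq (ha : ∀ j, a j ≠ 0)
    (hφ : ∀ j z, φ j z =
      a j * esymm k (kk j) z - MvPolynomial.eval (fun l => esymm k l.1 z) (Υ j))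
    {x y : Fin k → ℤ} (heq : ∀ j, φ j x = φ j y) {l : ℕ} (hl : l ∈ Finset.Icc 1 k) :
    ND_dcoef k r kk a Υ (fun l => esymm k l.1 x, fun l => esymm k l.1 y) l
      = esymm k l x - esymm k l y := by
  by_cases h : l ∈ compSet k r kk
  · rw [ND_dcoef, dif_pos h]
  · have h2 : ∃ j, kk j = l := by
      have : l ∈ Finset.image kk Finset.univ := by
        by_contra hc
        exact h (Finset.mem_sdiff.mpr ⟨hl, hc⟩)
      obtain ⟨j, _, hj⟩ := Finset.mem_image.mp this
      exact ⟨j, hj⟩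
    rw [ND_dcoef, dif_neg h, dif_pos h2]
    set j0 := h2.choose with hj0def
    have hj0 : kk j0 = l := h2.choose_spec
    have he := heq j0
    rw [hφ j0 x, hφ j0 y] at he
    have hkey : MvPolynomial.eval (fun l => esymm k l.1 x) (Υ j0)
        - MvPolynomial.eval (fun l => esymm k l.1 y) (Υ j0)
        = a j0 * (esymm k l x - esymm k l y) := by
      rw [← hj0]; linarith
    rw [hkey, Int.mul_ediv_cancel_left _ (ha j0)]

lemma ND_sum_range_eq_Icc (g : ℕ → ℤ) (hg : g 0 = 0) :
    ∑ l ∈ Finset.range (k+1), g l = ∑ l ∈ Finset.Icc 1 k, g l := by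
  have hins : Finset.range (k+1) = insert 0 (Finset.Icc 1 k) := by
    ext m; simp only [Finset.mem_range, Finset.mem_insert, Finset.mem_Icc]; omega
  rw [hins, Finset.sum_insert (by simp), hg, zero_add]

lemma ND_prod_eq {c} (hd : ∀ l ∈ Finset.Icc 1 k,
      ND_dcoef k r kk a Υ c l = esymm k l x - esymm k l y)
    {t : ℤ} {j : Fin k} (ht : x j = t) :
    ∏ m, (y m - t) = ND_Nfun k r kk a Υ c t := by
  have hx0 : ∑ l ∈ Finset.range (k+1), esymm k l x * (-t)^(k-l) = 0 := by
    rw [← ND_vieta k x (-t)]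
    exact Finset.prod_eq_zero (Finset.mem_univ j) (by rw [ht]; ring)
  calc ∏ m, (y m - t) = ∏ m, (y m + (-t)) := by
        refine Finset.prod_congr rfl fun m _ => by ring
    _ = ∑ l ∈ Finset.range (k+1), esymm k l y * (-t)^(k-l) := ND_vieta k y (-t)
    _ = ∑ l ∈ Finset.range (k+1), (esymm k l y - esymm k l x) * (-t)^(k-l) := by
        rw [show (∑ l ∈ Finset.range (k+1), (esymm k l y - esymm k l x) * (-t)^(k-l))
            = (∑ l ∈ Finset.range (k+1), esymm k l y * (-t)^(k-l))
              - ∑ l ∈ Finset.range (k+1), esymm k l x * (-t)^(k-l) by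
          rw [← Finset.sum_sub_distrib]
          exact Finset.sum_congr rfl fun l _ => by ring]
        rw [hx0, sub_zero]
    _ = ∑ l ∈ Finset.Icc 1 k, (esymm k l y - esymm k l x) * (-t)^(k-l) := by
        refine ND_sum_range_eq_Icc _ ?_
        rw [ND_esymm_zero, ND_esymm_zero]; ring
    _ = ND_Nfun k r kk a Υ c t := by
        rw [ND_Nfun, ← Finset.sum_neg_distrib]
        refine Finset.sum_congr rfl fun l hl => ?_
        rw [hd l hl]; ring

lemma ND_prod_eq' {c} (hd : ∀ l ∈ Finset.Icc 1 k,
      ND_dcoef k r kk a Υ c l = esymm k l x - esymm k l y)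
    {t : ℤ} {j : Fin k} (ht : y j = t) :
    ∏ m, (x m - t) = -ND_Nfun k r kk a Υ c t := by
  have hy0 : ∑ l ∈ Finset.range (k+1), esymm k l y * (-t)^(k-l) = 0 := by
    rw [← ND_vieta k y (-t)]
    exact Finset.prod_eq_zero (Finset.mem_univ j) (by rw [ht]; ring)
  calc ∏ m, (x m - t) = ∏ m, (x m + (-t)) := by
        refine Finset.prod_congr rfl fun m _ => by ring
    _ = ∑ l ∈ Finset.range (k+1), esymm k l x * (-t)^(k-l) := ND_vieta k x (-t)
    _ = ∑ l ∈ Finset.range (k+1), (esymm k l x - esymm k l y) * (-t)^(k-l) := by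
        rw [show (∑ l ∈ Finset.range (k+1), (esymm k l x - esymm k l y) * (-t)^(k-l))
            = (∑ l ∈ Finset.range (k+1), esymm k l x * (-t)^(k-l))
              - ∑ l ∈ Finset.range (k+1), esymm k l y * (-t)^(k-l) by
          rw [← Finset.sum_sub_distrib]
          exact Finset.sum_congr rfl fun l _ => by ring]
        rw [hy0, sub_zero]
    _ = ∑ l ∈ Finset.Icc 1 k, (esymm k l x - esymm k l y) * (-t)^(k-l) := by
        refine ND_sum_range_eq_Icc _ ?_
        rw [ND_esymm_zero, ND_esymm_zero]; ring
    _ = -ND_Nfun k r kk a Υ c t := by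
        rw [ND_Nfun, neg_neg]
        exact Finset.sum_congr rfl fun l hl => by rw [hd l hl]

end ident

lemma ND_sum_split {k : ℕ} (g : ℕ → ℤ) :
    ∑ l ∈ Finset.range (k+1), g l = g 0 + ∑ l ∈ Finset.Icc 1 k, g l := by
  have hins : Finset.range (k+1) = insert 0 (Finset.Icc 1 k) := by
    ext m; simp only [Finset.mem_range, Finset.mem_insert, Finset.mem_Icc]; omega
  rw [hins, Finset.sum_insert (by simp)]

lemma ND_root_mem {k : ℕ} {x : Fin k → ℤ} (m : Fin k) :
    (-(x m))^k + ∑ l ∈ Finset.Icc 1 k, esymm k l x * (-(x m))^(k-l) = 0 := by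
  have h0 : ∏ i, (x i + (-(x m))) = 0 :=
    Finset.prod_eq_zero (Finset.mem_univ m) (by ring)
  rw [ND_vieta k x (-(x m)), ND_sum_split] at h0
  rw [ND_esymm_zero, one_mul, Nat.sub_zero] at h0
  exact h0

lemma ND_core (k r : ℕ) (kk : Fin r → ℕ) (a : Fin r → ℤ)
    (Υ : Fin r → MvPolynomial {l // l ∈ compSet k r kk} ℤ)
    (φ : Fin r → (Fin k → ℤ) → ℤ) (ha : ∀ j, a j ≠ 0)
    (hφ : ∀ j z, φ j z =
      a j * esymm k (kk j) z - MvPolynomial.eval (fun l => esymm k l.1 z) (Υ j))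
    (X : ℕ) :
    (ND_sol k r φ X).card ≤ k^k * ∑ base ∈ ND_BaseF k r kk X,
      (ND_Dset (ND_Nfun k r kk a Υ base.1 base.2.2)).card ^ k := by
  classical
  -- Fiber bound
  have fiber : ∀ q ∈ (ND_sol k r φ X).image (ND_f k r kk),
      ((ND_sol k r φ X).filter fun p => ND_f k r kk p = q).card ≤ k^k := by
    intro q _
    obtain ⟨F, hFcard, hF⟩ := ND_root_count k (fun l =>
      if q.1.2.1 then esymm k l (fun m => q.1.2.2 + q.2 m) + ND_dcoef k r kk a Υ q.1.1 l
      else esymm k l (fun m => q.1.2.2 + q.2 m) - ND_dcoef k r kk a Υ q.1.1 l)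
    set y0 : Fin k → ℤ := fun m => q.1.2.2 + q.2 m with hy0def
    refine le_trans (Finset.card_le_card (?_ :
        _ ⊆ if q.1.2.1 then (Fintype.piFinset fun _ => F) ×ˢ {y0}
            else {y0} ×ˢ (Fintype.piFinset fun _ => F))) ?_
    · intro p hp
      obtain ⟨hsol, hfp⟩ := Finset.mem_filter.mp hp
      obtain ⟨_, hcond⟩ := Finset.mem_filter.mp hsol
      simp only [ND_f] at hfp
      by_cases h : ∃ j, p.1 j ∉ Set.range p.2
      · rw [dif_pos h] at hfp
        have hb : q.1.2.1 = true := by rw [← hfp]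
        have ht : q.1.2.2 = p.1 h.choose := by rw [← hfp]
        have hc1 : q.1.1 = (fun l => esymm k l.1 p.1, fun l => esymm k l.1 p.2) := by
          rw [← hfp]
        have hdv : q.2 = fun m => p.2 m - p.1 h.choose := by rw [← hfp]
        have hy0 : y0 = p.2 := by
          funext m; rw [hy0def, ht, hdv]; ring
        have hd : ∀ l ∈ Finset.Icc 1 k,
            ND_dcoef k r kk a Υ q.1.1 l = esymm k l p.1 - esymm k l p.2 := by
          intro l hl; rw [hc1]; exact ND_dcoef_eq ha hφ hcond.1 hl
        rw [if_pos hb]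
        rw [Finset.mem_product]
        constructor
        · rw [Fintype.mem_piFinset]
          intro m
          refine hF (p.1 m) ?_
          have he : ∀ l ∈ Finset.Icc 1 k,
              (if q.1.2.1 then esymm k l y0 + ND_dcoef k r kk a Υ q.1.1 l
               else esymm k l y0 - ND_dcoef k r kk a Υ q.1.1 l) = esymm k l p.1 := by
            intro l hl
            rw [hb, if_pos rfl, hy0, hd l hl]; ring
          rw [Finset.sum_congr rfl fun l hl => by rw [he l hl]]
          exact ND_root_mem m
        · rw [Finset.mem_singleton, hy0]
      · have h2 : ∃ j, p.2 j ∉ Set.range p.1 := by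
          obtain ⟨j, hj⟩ := hcond.2
          rcases hj with hj | hj
          · exact ⟨j, hj⟩
          · exact absurd ⟨j, hj⟩ h
        rw [dif_neg h, dif_pos h2] at hfp
        have hb : q.1.2.1 = false := by rw [← hfp]
        have ht : q.1.2.2 = p.2 h2.choose := by rw [← hfp]
        have hc1 : q.1.1 = (fun l => esymm k l.1 p.1, fun l => esymm k l.1 p.2) := by
          rw [← hfp]
        have hdv : q.2 = fun m => p.1 m - p.2 h2.choose := by rw [← hfp]
        have hy0 : y0 = p.1 := by
          funext m; rw [hy0def, ht, hdv]; ring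
        have hd : ∀ l ∈ Finset.Icc 1 k,
            ND_dcoef k r kk a Υ q.1.1 l = esymm k l p.1 - esymm k l p.2 := by
          intro l hl; rw [hc1]; exact ND_dcoef_eq ha hφ hcond.1 hl
        rw [if_neg (by rw [hb]; exact Bool.false_ne_true)]
        rw [Finset.mem_product]
        constructor
        · rw [Finset.mem_singleton, hy0]
        · rw [Fintype.mem_piFinset]
          intro m
          refine hF (p.2 m) ?_
          have he : ∀ l ∈ Finset.Icc 1 k,
              (if q.1.2.1 then esymm k l y0 + ND_dcoef k r kk a Υ q.1.1 l
               else esymm k l y0 - ND_dcoef k r kk a Υ q.1.1 l) = esymm k l p.2 := by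
            intro l hl
            rw [hb, if_neg Bool.false_ne_true, hy0, hd l hl]; ring
          rw [Finset.sum_congr rfl fun l hl => by rw [he l hl]]
          exact ND_root_mem m
    · have hpi : (Fintype.piFinset fun _ : Fin k => F).card = F.card ^ k := by
        rw [Fintype.card_piFinset]
        rw [Finset.prod_const, Finset.card_univ, Fintype.card_fin]
      split_ifs
      · rw [Finset.card_product, hpi, Finset.card_singleton, mul_one]
        exact Nat.pow_le_pow_left hFcard k
      · rw [Finset.card_product, hpi, Finset.card_singleton, one_mul]
        exact Nat.pow_le_pow_left hFcard k
  -- Image bound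
  have himg : (ND_sol k r φ X).image (ND_f k r kk) ⊆
      (ND_BaseF k r kk X).biUnion fun base =>
        {base} ×ˢ Fintype.piFinset fun _ : Fin k =>
          ND_Dset (ND_Nfun k r kk a Υ base.1 base.2.2) := by
    intro q hq
    obtain ⟨p, hpsol, hfp⟩ := Finset.mem_image.mp hq
    obtain ⟨hpmem, hcond⟩ := Finset.mem_filter.mp hpsol
    rw [Finset.mem_product] at hpmem
    have hx : ∀ i, p.1 i ∈ Finset.Icc (1:ℤ) (X:ℤ) := Fintype.mem_piFinset.mp hpmem.1
    have hy : ∀ i, p.2 i ∈ Finset.Icc (1:ℤ) (X:ℤ) := Fintype.mem_piFinset.mp hpmem.2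
    have hxb : ∀ i, 1 ≤ p.1 i ∧ p.1 i ≤ (X:ℤ) := fun i => Finset.mem_Icc.mp (hx i)
    have hyb : ∀ i, 1 ≤ p.2 i ∧ p.2 i ≤ (X:ℤ) := fun i => Finset.mem_Icc.mp (hy i)
    have hcxmem : (fun l : {l // l ∈ compSet k r kk} => esymm k l.1 p.1) ∈ ND_cxFin k r kk X := by
      rw [ND_cxFin, Fintype.mem_piFinset]
      intro l
      rw [Finset.mem_Icc, ← abs_le]
      exact ND_esymm_abs_le k X p.1 hxb l.1
    have hcymem : (fun l : {l // l ∈ compSet k r kk} => esymm k l.1 p.2) ∈ ND_cxFin k r kk X := by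
      rw [ND_cxFin, Fintype.mem_piFinset]
      intro l
      rw [Finset.mem_Icc, ← abs_le]
      exact ND_esymm_abs_le k X p.2 hyb l.1
    have hd : ∀ l ∈ Finset.Icc 1 k,
        ND_dcoef k r kk a Υ (fun l => esymm k l.1 p.1, fun l => esymm k l.1 p.2) l
          = esymm k l p.1 - esymm k l p.2 := fun l hl => ND_dcoef_eq ha hφ hcond.1 hl
    rw [Finset.mem_biUnion]
    refine ⟨q.1, ?_, ?_⟩
    · -- q.1 ∈ ND_BaseF
      simp only [ND_f] at hfp
      by_cases h : ∃ j, p.1 j ∉ Set.range p.2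
      · rw [dif_pos h] at hfp
        have hq1 : q.1 = ((fun l => esymm k l.1 p.1, fun l => esymm k l.1 p.2),
            (true, p.1 h.choose)) := by rw [← hfp]
        rw [hq1, ND_BaseF, Finset.mem_product]
        refine ⟨Finset.mem_product.mpr ⟨hcxmem, hcymem⟩,
          Finset.mem_product.mpr ⟨Finset.mem_univ _, hx h.choose⟩⟩
      · have h2 : ∃ j, p.2 j ∉ Set.range p.1 := by
          obtain ⟨j, hj⟩ := hcond.2
          rcases hj with hj | hj
          · exact ⟨j, hj⟩
          · exact absurd ⟨j, hj⟩ h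
        rw [dif_neg h, dif_pos h2] at hfp
        have hq1 : q.1 = ((fun l => esymm k l.1 p.1, fun l => esymm k l.1 p.2),
            (false, p.2 h2.choose)) := by rw [← hfp]
        rw [hq1, ND_BaseF, Finset.mem_product]
        refine ⟨Finset.mem_product.mpr ⟨hcxmem, hcymem⟩,
          Finset.mem_product.mpr ⟨Finset.mem_univ _, hy h2.choose⟩⟩
    · -- (q.1, q.2) ∈ {q.1} ×ˢ piFinset Dset
      rw [Finset.mem_product]
      refine ⟨by simp [Prod.ext_iff], ?_⟩
      rw [Fintype.mem_piFinset]
      intro m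
      simp only [ND_f] at hfp
      by_cases h : ∃ j, p.1 j ∉ Set.range p.2
      · rw [dif_pos h] at hfp
        have hc1 : q.1.1 = (fun l => esymm k l.1 p.1, fun l => esymm k l.1 p.2) := by
          rw [← hfp]
        have ht : q.1.2.2 = p.1 h.choose := by rw [← hfp]
        have hdv : q.2 = fun m => p.2 m - p.1 h.choose := by rw [← hfp]
        have hprod : ∏ i, (p.2 i - p.1 h.choose)
            = ND_Nfun k r kk a Υ q.1.1 q.1.2.2 := by
          rw [hc1, ht]
          exact ND_prod_eq hd rfl
        have hne : ∀ i, p.2 i - p.1 h.choose ≠ 0 := by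
          intro i hi
          exact h.choose_spec ⟨i, by linarith [sub_eq_zero.mp hi]⟩
        have hNne : ND_Nfun k r kk a Υ q.1.1 q.1.2.2 ≠ 0 := by
          rw [← hprod]
          exact Finset.prod_ne_zero_iff.mpr fun i _ => hne i
        refine ND_mem_Dset ?_ hNne
        rw [hdv, ← hprod]
        exact Finset.dvd_prod_of_mem _ (Finset.mem_univ m)
      · have h2 : ∃ j, p.2 j ∉ Set.range p.1 := by
          obtain ⟨j, hj⟩ := hcond.2
          rcases hj with hj | hj
          · exact ⟨j, hj⟩
          · exact absurd ⟨j, hj⟩ h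
        rw [dif_neg h, dif_pos h2] at hfp
        have hc1 : q.1.1 = (fun l => esymm k l.1 p.1, fun l => esymm k l.1 p.2) := by
          rw [← hfp]
        have ht : q.1.2.2 = p.2 h2.choose := by rw [← hfp]
        have hdv : q.2 = fun m => p.1 m - p.2 h2.choose := by rw [← hfp]
        have hprod : ∏ i, (p.1 i - p.2 h2.choose)
            = -ND_Nfun k r kk a Υ q.1.1 q.1.2.2 := by
          rw [hc1, ht]
          exact ND_prod_eq' hd rfl
        have hne : ∀ i, p.1 i - p.2 h2.choose ≠ 0 := by
          intro i hi
          exact h2.choose_spec ⟨i, by linarith [sub_eq_zero.mp hi]⟩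
        have hNne : ND_Nfun k r kk a Υ q.1.1 q.1.2.2 ≠ 0 := by
          intro h0
          have : (-ND_Nfun k r kk a Υ q.1.1 q.1.2.2) = 0 := by rw [h0]; ring
          rw [← hprod] at this
          exact (Finset.prod_ne_zero_iff.mpr fun i _ => hne i) this
        refine ND_mem_Dset ?_ hNne
        rw [hdv]
        refine (Int.dvd_neg).mp ?_
        rw [← hprod]
        exact Finset.dvd_prod_of_mem _ (Finset.mem_univ m)
  calc (ND_sol k r φ X).card
      ≤ k^k * ((ND_sol k r φ X).image (ND_f k r kk)).card :=
        Finset.card_le_mul_card_image _ _ fiber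
    _ ≤ k^k * ∑ base ∈ ND_BaseF k r kk X,
        (ND_Dset (ND_Nfun k r kk a Υ base.1 base.2.2)).card ^ k := by
        refine Nat.mul_le_mul_left _ ?_
        refine le_trans (Finset.card_le_card himg) ?_
        refine le_trans (Finset.card_biUnion_le) ?_
        refine Finset.sum_le_sum fun base _ => ?_
        rw [Finset.card_product, Finset.card_singleton, one_mul, Fintype.card_piFinset]
        rw [Finset.prod_const, Finset.card_univ, Fintype.card_fin]

lemma ND_choose_le (k l : ℕ) : k.choose l ≤ 2^k := by
  rcases le_or_gt l k with h | h
  · calc k.choose l ≤ ∑ i ∈ Finset.range (k+1), k.choose i :=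
        Finset.single_le_sum (fun _ _ => Nat.zero_le _)
          (Finset.mem_range.mpr (by omega))
      _ = 2^k := Nat.sum_range_choose k
  · rw [Nat.choose_eq_zero_of_lt h]; exact Nat.zero_le _

lemma ND_compSet_subset (k r : ℕ) (kk : Fin r → ℕ) : compSet k r kk ⊆ Finset.Icc 1 k :=
  Finset.sdiff_subset

lemma ND_cxFin_card (k r : ℕ) (kk : Fin r → ℕ) (X : ℕ) (hX : 1 ≤ X) :
    (ND_cxFin k r kk X).card ≤ (3*2^k)^k * X^(∑ l ∈ compSet k r kk, l) := by
  rw [ND_cxFin, Fintype.card_piFinset]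
  have hcard : ∀ l : {l // l ∈ compSet k r kk},
      (Finset.Icc (-((k.choose l.1 : ℤ) * (X:ℤ)^l.1)) ((k.choose l.1 : ℤ) * (X:ℤ)^l.1)).card
        = 2 * (k.choose l.1) * X^l.1 + 1 := by
    intro l
    rw [Int.card_Icc]
    rw [show ((k.choose l.1 : ℤ) * (X:ℤ)^l.1 + 1 - -((k.choose l.1 : ℤ) * (X:ℤ)^l.1))
        = ((2 * (k.choose l.1) * X^l.1 + 1 : ℕ) : ℤ) by push_cast; ring]
    norm_cast
  rw [Finset.prod_congr rfl fun l _ => hcard l]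
  calc ∏ l : {l // l ∈ compSet k r kk}, (2 * (k.choose l.1) * X^l.1 + 1)
      = ∏ l ∈ compSet k r kk, (2 * (k.choose l) * X^l + 1) :=
        Finset.prod_coe_sort (compSet k r kk) (fun n => 2 * k.choose n * X^n + 1)
    _ ≤ ∏ l ∈ compSet k r kk, (3 * 2^k) * X^l := by
        refine Finset.prod_le_prod' fun l hl => ?_
        have hlk : l ≤ k := (Finset.mem_Icc.mp (ND_compSet_subset k r kk hl)).2
        have h1 : 1 ≤ k.choose l * X^l :=
          Nat.one_le_iff_ne_zero.mpr (Nat.mul_ne_zero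
            (Nat.choose_pos hlk).ne' (Nat.pos_of_ne_zero (by positivity)).ne')
        have h2 : k.choose l ≤ 2^k := ND_choose_le k l
        calc 2 * (k.choose l) * X^l + 1 ≤ 3 * (k.choose l * X^l) := by
              have h3 : 2 * (k.choose l) * X^l = 2*(k.choose l * X^l) := by ring
              rw [h3]; omega
          _ ≤ 3 * (2^k * X^l) :=
              Nat.mul_le_mul (le_refl 3) (Nat.mul_le_mul h2 (le_refl _))
          _ = (3 * 2^k) * X^l := by ring
    _ = (3*2^k)^(compSet k r kk).card * X^(∑ l ∈ compSet k r kk, l) := by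
        rw [Finset.prod_mul_distrib, Finset.prod_const, Finset.prod_pow_eq_pow_sum]
    _ ≤ (3*2^k)^k * X^(∑ l ∈ compSet k r kk, l) := by
        refine Nat.mul_le_mul_right _ (Nat.pow_le_pow_right (by positivity) ?_)
        calc (compSet k r kk).card ≤ (Finset.Icc 1 k).card :=
              Finset.card_le_card (ND_compSet_subset k r kk)
          _ = k := by rw [Nat.card_Icc]; omega

lemma ND_BaseF_card (k r : ℕ) (kk : Fin r → ℕ) (X : ℕ) (hX : 1 ≤ X) :
    (ND_BaseF k r kk X).card
      ≤ ((3*2^k)^k * X^(∑ l ∈ compSet k r kk, l))^2 * (2 * X) := by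
  rw [ND_BaseF, Finset.card_product, Finset.card_product, Finset.card_product]
  have h1 : (Finset.univ : Finset Bool).card = 2 := by simp
  have h2 : (Finset.Icc (1:ℤ) (X:ℤ)).card = X := by rw [Int.card_Icc]; omega
  rw [h1, h2]
  have := ND_cxFin_card k r kk X hX
  calc (ND_cxFin k r kk X).card * (ND_cxFin k r kk X).card * (2 * X)
      ≤ ((3*2^k)^k * X^(∑ l ∈ compSet k r kk, l))
        * ((3*2^k)^k * X^(∑ l ∈ compSet k r kk, l)) * (2 * X) :=
        Nat.mul_le_mul (Nat.mul_le_mul this this) (le_refl _)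
    _ = ((3*2^k)^k * X^(∑ l ∈ compSet k r kk, l))^2 * (2 * X) := by ring

lemma ND_Nfun_bound (k r : ℕ) (kk : Fin r → ℕ) (a : Fin r → ℤ)
    (Υ : Fin r → MvPolynomial {l // l ∈ compSet k r kk} ℤ)
    (X : ℕ) (hX : 1 ≤ X) (DD : ℕ) (hDD : 1 ≤ DD) (CU : ℤ) (hCU1 : 1 ≤ CU)
    (hCU : ∀ (j : Fin r) (c : {l // l ∈ compSet k r kk} → ℤ) (S : ℤ), 1 ≤ S →
      (∀ i, |c i| ≤ S) → |MvPolynomial.eval c (Υ j)| ≤ CU * S^DD)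
    (c : ({l // l ∈ compSet k r kk} → ℤ) × ({l // l ∈ compSet k r kk} → ℤ)) (t : ℤ)
    (hc1 : ∀ l, |c.1 l| ≤ 2^k * (X:ℤ)^k) (hc2 : ∀ l, |c.2 l| ≤ 2^k * (X:ℤ)^k)
    (hT : |t| ≤ (X:ℤ)) :
    |ND_Nfun k r kk a Υ c t| ≤ (4*(k:ℤ)*CU) * (2^(k*(DD+1))) * (X:ℤ)^(k*(DD+1)) := by
  set S : ℤ := 2^k * (X:ℤ)^k with hSdef
  have hX1 : (1:ℤ) ≤ (X:ℤ) := by exact_mod_cast hX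
  have hS1 : (1:ℤ) ≤ S := by
    rw [hSdef]
    calc (1:ℤ) = 1 * 1 := by ring
      _ ≤ 2^k * (X:ℤ)^k := by
          refine mul_le_mul (one_le_pow₀ (by norm_num)) (one_le_pow₀ hX1) (by norm_num) (by positivity)
  have hS0 : (0:ℤ) ≤ S := le_trans zero_le_one hS1
  have hdc : ∀ l, |ND_dcoef k r kk a Υ c l| ≤ 4*CU*S^DD := by
    intro l
    have hSD : S ≤ S^DD := le_self_pow₀ hS1 (by omega)
    have hSD1 : (1:ℤ) ≤ S^DD := one_le_pow₀ hS1
    rw [ND_dcoef]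
    split_ifs with h h2
    · calc |c.1 ⟨l, h⟩ - c.2 ⟨l, h⟩| ≤ |c.1 ⟨l, h⟩| + |c.2 ⟨l, h⟩| := abs_sub _ _
        _ ≤ S + S := add_le_add (hc1 _) (hc2 _)
        _ ≤ 4*CU*S^DD := by nlinarith
    · calc |(MvPolynomial.eval c.1 (Υ h2.choose) - MvPolynomial.eval c.2 (Υ h2.choose))
            / a h2.choose|
          ≤ |MvPolynomial.eval c.1 (Υ h2.choose) - MvPolynomial.eval c.2 (Υ h2.choose)| :=
            Int.abs_ediv_le_abs _ _
        _ ≤ |MvPolynomial.eval c.1 (Υ h2.choose)| + |MvPolynomial.eval c.2 (Υ h2.choose)| :=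
            abs_sub _ _
        _ ≤ CU * S^DD + CU * S^DD :=
            add_le_add (hCU _ _ _ hS1 hc1) (hCU _ _ _ hS1 hc2)
        _ ≤ 4*CU*S^DD := by nlinarith
    · simp only [abs_zero]
      positivity
  calc |ND_Nfun k r kk a Υ c t|
      = |∑ l ∈ Finset.Icc 1 k, ND_dcoef k r kk a Υ c l * (-t)^(k-l)| := by
        rw [ND_Nfun, abs_neg]
    _ ≤ ∑ l ∈ Finset.Icc 1 k, |ND_dcoef k r kk a Υ c l * (-t)^(k-l)| :=
        Finset.abs_sum_le_sum_abs _ _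
    _ ≤ ∑ l ∈ Finset.Icc 1 k, (4*CU*S^DD) * S := by
        refine Finset.sum_le_sum fun l _ => ?_
        rw [abs_mul]
        refine mul_le_mul (hdc l) ?_ (abs_nonneg _) (by positivity)
        rw [abs_pow, abs_neg]
        calc |t|^(k-l) ≤ (X:ℤ)^(k-l) := pow_le_pow_left₀ (abs_nonneg t) hT _
          _ ≤ (X:ℤ)^k := pow_le_pow_right₀ hX1 (Nat.sub_le k l)
          _ ≤ S := by
              rw [hSdef]
              nlinarith [one_le_pow₀ (show (1:ℤ) ≤ 2 by norm_num) (n := k), pow_nonneg (show (0:ℤ) ≤ (X:ℤ)by positivity) k]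
    _ = (k:ℤ) * ((4*CU*S^DD) * S) := by
        rw [Finset.sum_const, Nat.card_Icc, nsmul_eq_mul]
        norm_num
    _ = (4*(k:ℤ)*CU) * S^(DD+1) := by ring
    _ = (4*(k:ℤ)*CU) * (2^(k*(DD+1))) * (X:ℤ)^(k*(DD+1)) := by
        rw [hSdef]
        rw [show (2^k * (X:ℤ)^k)^(DD+1) = (2:ℤ)^(k*(DD+1)) * (X:ℤ)^(k*(DD+1)) by
          rw [mul_pow, ← pow_mul, ← pow_mul]]
        ring

lemma ND_pairCount_eq (k r : ℕ) (φ : Fin r → (Fin k → ℤ) → ℤ) (X : ℕ) :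
    pairCount k X (fun x y => (∀ j, φ j x = φ j y) ∧
      ∃ j : Fin k, y j ∉ Set.range x ∨ x j ∉ Set.range y) = (ND_sol k r φ X).card := by
  classical
  rw [pairCount, ← Nat.card_eq_finsetCard]
  refine Nat.card_congr (Equiv.subtypeEquivRight fun p => ?_)
  simp only [ND_sol, ND_box, Finset.mem_filter, Finset.mem_product, Fintype.mem_piFinset,
    Finset.mem_Icc]
  constructor
  · rintro ⟨h1, h2, h3, j, hj⟩
    exact ⟨⟨h1, h2⟩, h3, j, hj⟩
  · rintro ⟨⟨h1, h2⟩, h3, j, hj⟩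
    exact ⟨h1, h2, h3, j, hj⟩

lemma ND_gauss (k : ℕ) : ∑ i ∈ Finset.Icc 1 k, (i:ℝ) = (k:ℝ)*((k:ℝ)+1)/2 := by
  induction k with
  | zero => simp
  | succ n ih =>
    rw [Finset.sum_Icc_succ_top (by omega), ih]
    push_cast
    ring

lemma ND_w_eq (k r : ℕ) (hr : 0 < r) (kk : Fin r → ℕ) (hmono : StrictMono kk)
    (hfirst : 1 ≤ kk ⟨0, hr⟩) (hlast : kk ⟨r - 1, Nat.sub_lt hr Nat.one_pos⟩ = k) :
    ((∑ l ∈ compSet k r kk, l : ℕ) : ℝ) = ((k:ℝ) * ((k:ℝ) + 1)) / 2 - ∑ j, (kk j : ℝ) := by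
  have himg : Finset.image kk Finset.univ ⊆ Finset.Icc 1 k := by
    intro m hm
    obtain ⟨j, _, hj⟩ := Finset.mem_image.mp hm
    rw [Finset.mem_Icc, ← hj]
    constructor
    · exact le_trans hfirst (hmono.monotone (by simp [Fin.le_def]))
    · rw [← hlast]
      exact hmono.monotone (by simp [Fin.le_def]; omega)
  rw [Nat.cast_sum, compSet, Finset.sum_sdiff_eq_sub himg]
  rw [Finset.sum_image (fun x _ y _ h => hmono.injective h)]
  rw [ND_gauss]
/-- Nonlinear analogue of the bound (2.11). With
`φ_j(z) = a_j σ_{k_j}(z) − Υ_j(σ_{l_1}(z),…,σ_{l_R}(z))`, the number of non-diagonal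
solutions, i.e. pairs `(x,y)` with `1 ≤ x_i, y_i ≤ X` satisfying `φ_j(x) = φ_j(y)` for all
`j`, for which some `y_j` avoids `{x_1,…,x_k}` or some `x_j` avoids `{y_1,…,y_k}`, is
`O(X^{2w(φ)+1+ε})`. -/
theorem nondiagonal_bound_nonlinear (k r : ℕ) (hr : 0 < r) (kk : Fin r → ℕ)
    (hmono : StrictMono kk) (hfirst : 1 ≤ kk ⟨0, hr⟩)
    (hlast : kk ⟨r - 1, Nat.sub_lt hr Nat.one_pos⟩ = k)
    (a : Fin r → ℤ) (ha : ∀ j, a j ≠ 0)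
    (Υ : Fin r → MvPolynomial {l // l ∈ compSet k r kk} ℤ)
    (φ : Fin r → (Fin k → ℤ) → ℤ)
    (hφ : ∀ j z, φ j z =
      a j * esymm k (kk j) z - MvPolynomial.eval (fun l => esymm k l.1 z) (Υ j))
    (ε : ℝ) (hε : 0 < ε) :
    (fun X : ℕ =>
        (pairCount k X (fun x y => (∀ j, φ j x = φ j y) ∧
          ∃ j : Fin k, y j ∉ Set.range x ∨ x j ∉ Set.range y) : ℝ))
      =O[atTop]
      fun X : ℕ =>
        (X : ℝ) ^ (2 * ((k * (k + 1) : ℝ) / 2 - (∑ j, (kk j : ℝ))) + 1 + ε) := by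
  classical
  have hk1 : 1 ≤ k := by
    have h0 : kk ⟨0, hr⟩ ≤ kk ⟨r - 1, Nat.sub_lt hr Nat.one_pos⟩ :=
      hmono.monotone (by simp [Fin.le_def])
    rw [hlast] at h0
    omega
  set w : ℕ := ∑ l ∈ compSet k r kk, l with hwdef
  have hwR := ND_w_eq k r hr kk hmono hfirst hlast
  choose Cf hCf0 hCf using fun j => ND_mvpoly_bound (Υ j)
  set DD : ℕ := (Finset.univ.sup fun j => (Υ j).totalDegree) + 1 with hDDdef
  have hDD1 : 1 ≤ DD := Nat.le_add_left 1 _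
  set CU : ℤ := 1 + ∑ j, |Cf j| with hCUdef
  have hsum0 : (0:ℤ) ≤ ∑ j, |Cf j| := Finset.sum_nonneg fun j _ => abs_nonneg _
  have hCU1 : (1:ℤ) ≤ CU := by rw [hCUdef]; linarith
  have hCUb : ∀ (j : Fin r) (c : {l // l ∈ compSet k r kk} → ℤ) (S : ℤ), 1 ≤ S →
      (∀ i, |c i| ≤ S) → |MvPolynomial.eval c (Υ j)| ≤ CU * S^DD := by
    intro j c S hS hc
    refine le_trans (hCf j c S hS hc) ?_
    have h1 : Cf j ≤ CU := by
      have h3 := Finset.single_le_sum (f := fun j => |Cf j|)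
        (fun _ _ => abs_nonneg _) (Finset.mem_univ j)
      have h2 := le_abs_self (Cf j)
      rw [hCUdef]; linarith
    have h2 : S^((Υ j).totalDegree) ≤ S^DD := by
      refine pow_le_pow_right₀ hS ?_
      have h5 : (Υ j).totalDegree ≤ Finset.univ.sup fun j => (Υ j).totalDegree := by
        simpa using Finset.le_sup (f := fun j => (Υ j).totalDegree) (Finset.mem_univ j)
      rw [hDDdef]
      omega
    exact mul_le_mul h1 h2 (by positivity) (by linarith)
  set EE : ℕ := k*(DD+1) with hEEdef
  have hEE1 : 1 ≤ EE := by
    calc 1 = 1*1 := rfl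
      _ ≤ k*(DD+1) := Nat.mul_le_mul hk1 (by omega)
  have hEKpos : (0:ℝ) < ((EE*k : ℕ):ℝ) := by
    have : 1 ≤ EE * k := Nat.mul_le_mul hEE1 hk1
    exact_mod_cast by omega
  set δ : ℝ := ε / ((EE*k : ℕ):ℝ) with hδdef
  have hδ : 0 < δ := div_pos hε hEKpos
  obtain ⟨Cd, hCd1, hCd⟩ := ND_divisor_bound δ hδ
  set C4 : ℤ := (4*(k:ℤ)*CU) * (2^EE) with hC4def
  have hk0Z : (1:ℤ) ≤ (k:ℤ) := by exact_mod_cast hk1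
  have hC40 : (0:ℤ) ≤ C4 := by
    rw [hC4def]
    have h2E : (0:ℤ) ≤ 2^EE := by positivity
    refine mul_nonneg (mul_nonneg (mul_nonneg (by norm_num) (by linarith)) (by linarith)) h2E
  have hC40R : (0:ℝ) ≤ (C4:ℝ) := by exact_mod_cast hC40
  rw [Asymptotics.isBigO_iff]
  refine ⟨((k:ℝ)^k * (((3*2^k)^k : ℕ):ℝ)^2 * 2) * (2*Cd*(C4:ℝ)^δ)^k, ?_⟩
  filter_upwards [Filter.eventually_ge_atTop 1] with X hX
  have hX1R : (1:ℝ) ≤ (X:ℝ) := by exact_mod_cast hX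
  have hXpos : (0:ℝ) < (X:ℝ) := by linarith
  rw [Real.norm_eq_abs, Real.norm_eq_abs,
    abs_of_nonneg (by positivity : (0:ℝ) ≤ ((pairCount k X _ : ℕ):ℝ)),
    abs_of_nonneg (Real.rpow_nonneg hXpos.le _)]
  rw [ND_pairCount_eq k r φ X]
  have hexp : 2 * (((k:ℕ) * ((k:ℕ) + 1) : ℝ) / 2 - ∑ j, ((kk j : ℕ) : ℝ)) + 1 + ε
      = 2*((w:ℕ):ℝ) + 1 + ε := by rw [hwR]
  rw [hexp]
  -- per-base divisor-set bound
  set DB : ℝ := 2*Cd*((C4:ℝ)*(X:ℝ)^EE)^δ with hDBdef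
  have hDB0 : 0 ≤ DB := by
    have : (0:ℝ) ≤ ((C4:ℝ)*(X:ℝ)^EE)^δ := Real.rpow_nonneg (by positivity) δ
    rw [hDBdef]; nlinarith
  have hDper : ∀ base ∈ ND_BaseF k r kk X,
      ((ND_Dset (ND_Nfun k r kk a Υ base.1 base.2.2)).card : ℝ) ≤ DB := by
    intro base hbase
    rw [ND_BaseF, Finset.mem_product] at hbase
    obtain ⟨hcc, hbt⟩ := hbase
    rw [Finset.mem_product] at hcc hbt
    have hcbound : ∀ (g : {l // l ∈ compSet k r kk} → ℤ), g ∈ ND_cxFin k r kk X →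
        ∀ l, |g l| ≤ 2^k*(X:ℤ)^k := by
      intro g hg l
      rw [ND_cxFin] at hg
      have hmem := Fintype.mem_piFinset.mp hg l
      rw [Finset.mem_Icc] at hmem
      have h1 : |g l| ≤ (k.choose l.1 : ℤ) * (X:ℤ)^l.1 := abs_le.mpr hmem
      refine le_trans h1 ?_
      have hlk : l.1 ≤ k := (Finset.mem_Icc.mp (ND_compSet_subset k r kk l.2)).2
      have hch : (k.choose l.1 : ℤ) ≤ 2^k := by exact_mod_cast ND_choose_le k l.1
      have hXk : (X:ℤ)^l.1 ≤ (X:ℤ)^k :=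
        pow_le_pow_right₀ (by exact_mod_cast hX) hlk
      exact mul_le_mul hch hXk (by positivity) (by positivity)
    have hc1 := hcbound base.1.1 hcc.1
    have hc2 := hcbound base.1.2 hcc.2
    have hT : |base.2.2| ≤ (X:ℤ) := by
      have := Finset.mem_Icc.mp hbt.2
      rw [abs_le]
      exact ⟨by linarith [this.1], this.2⟩
    have hNb := ND_Nfun_bound k r kk a Υ X hX DD hDD1 CU hCU1 hCUb base.1 base.2.2 hc1 hc2 hT
    set N := ND_Nfun k r kk a Υ base.1 base.2.2 with hNdef
    by_cases hN : N = 0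
    · rw [hN]
      have : ND_Dset 0 = ∅ := by simp [ND_Dset]
      rw [this]
      simpa using hDB0
    · have hNnat : ((N.natAbs : ℕ):ℝ) ≤ (C4:ℝ)*(X:ℝ)^EE := by
        have h1 : |N| ≤ C4 * (X:ℤ)^EE := by rw [hC4def]; exact hNb
        have h2 : ((|N| : ℤ):ℝ) ≤ ((C4 * (X:ℤ)^EE : ℤ):ℝ) := by exact_mod_cast h1
        rw [Nat.cast_natAbs]
        exact_mod_cast h1
      calc ((ND_Dset N).card : ℝ) ≤ 2 * (N.natAbs.divisors.card:ℝ) := by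
            exact_mod_cast ND_Dset_card_le N
        _ ≤ 2 * (Cd * ((N.natAbs:ℕ):ℝ)^δ) := by
            refine mul_le_mul_of_nonneg_left
              (hCd N.natAbs (Int.natAbs_ne_zero.mpr hN)) (by norm_num)
        _ ≤ DB := by
            rw [hDBdef, mul_assoc]
            refine mul_le_mul_of_nonneg_left ?_ (by norm_num)
            refine mul_le_mul_of_nonneg_left ?_ (by linarith)
            exact Real.rpow_le_rpow (Nat.cast_nonneg _) hNnat hδ.le
  -- assemble
  have hcore := ND_core k r kk a Υ φ ha hφ X
  have hBF := ND_BaseF_card k r kk X hX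
  have hchain : ((ND_sol k r φ X).card : ℝ)
      ≤ (k:ℝ)^k * ((((3*2^k)^k : ℕ):ℝ)^2 * ((X:ℝ)^w)^2 * (2*(X:ℝ)) * DB^k) := by
    calc ((ND_sol k r φ X).card : ℝ)
        ≤ ((k^k * ∑ base ∈ ND_BaseF k r kk X,
            (ND_Dset (ND_Nfun k r kk a Υ base.1 base.2.2)).card ^ k : ℕ) : ℝ) := by
          exact_mod_cast hcore
      _ = (k:ℝ)^k * ∑ base ∈ ND_BaseF k r kk X,
            ((ND_Dset (ND_Nfun k r kk a Υ base.1 base.2.2)).card : ℝ) ^ k := by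
          push_cast; ring
      _ ≤ (k:ℝ)^k * ∑ _base ∈ ND_BaseF k r kk X, DB^k := by
          refine mul_le_mul_of_nonneg_left (Finset.sum_le_sum fun base hb => ?_) (by positivity)
          exact pow_le_pow_left₀ (Nat.cast_nonneg _) (hDper base hb) k
      _ = (k:ℝ)^k * (((ND_BaseF k r kk X).card : ℝ) * DB^k) := by
          rw [Finset.sum_const, nsmul_eq_mul]
      _ ≤ (k:ℝ)^k * (((((3*2^k)^k * X^w)^2 * (2 * X) : ℕ):ℝ) * DB^k) := by
          refine mul_le_mul_of_nonneg_left
            (mul_le_mul_of_nonneg_right (by exact_mod_cast hBF) (by positivity)) (by positivity)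
      _ = (k:ℝ)^k * ((((3*2^k)^k : ℕ):ℝ)^2 * ((X:ℝ)^w)^2 * (2*(X:ℝ)) * DB^k) := by
          push_cast; ring
  -- convert DB^k
  have hDBk : DB^k = (2*Cd*(C4:ℝ)^δ)^k * (X:ℝ)^ε := by
    have h1 : ((C4:ℝ)*(X:ℝ)^EE)^δ = (C4:ℝ)^δ * (X:ℝ)^(((EE:ℕ):ℝ)*δ) := by
      rw [Real.mul_rpow hC40R (by positivity), ← Real.rpow_natCast (X:ℝ) EE,
        ← Real.rpow_mul hXpos.le]
    have h2 : ((X:ℝ)^(((EE:ℕ):ℝ)*δ))^k = (X:ℝ)^ε := by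
      rw [← Real.rpow_natCast ((X:ℝ)^(((EE:ℕ):ℝ)*δ)) k, ← Real.rpow_mul hXpos.le]
      congr 1
      rw [hδdef]
      have hEne : ((EE*k : ℕ):ℝ) ≠ 0 := ne_of_gt hEKpos
      push_cast at hEne ⊢
      field_simp
    rw [hDBdef, h1]
    rw [show 2*Cd*((C4:ℝ)^δ * (X:ℝ)^(((EE:ℕ):ℝ)*δ)) = (2*Cd*(C4:ℝ)^δ) * (X:ℝ)^(((EE:ℕ):ℝ)*δ) by ring]
    rw [mul_pow, h2]
  -- final exponent manipulation
  have hfinal : (k:ℝ)^k * ((((3*2^k)^k : ℕ):ℝ)^2 * ((X:ℝ)^w)^2 * (2*(X:ℝ)) *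
        ((2*Cd*(C4:ℝ)^δ)^k * (X:ℝ)^ε))
      = (((k:ℝ)^k * (((3*2^k)^k : ℕ):ℝ)^2 * 2) * (2*Cd*(C4:ℝ)^δ)^k) *
        ((X:ℝ)^(2*((w:ℕ):ℝ) + 1 + ε)) := by
    have hx2w : ((X:ℝ)^w)^2 * (X:ℝ) * (X:ℝ)^ε = (X:ℝ)^(2*((w:ℕ):ℝ) + 1 + ε) := by
      have e1 : (X:ℝ)^(2*((w:ℕ):ℝ) + 1 + ε)
          = (X:ℝ)^(2*((w:ℕ):ℝ)) * (X:ℝ)^(1:ℝ) * (X:ℝ)^ε := by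
        rw [← Real.rpow_add hXpos, ← Real.rpow_add hXpos]
      have e2 : (X:ℝ)^(2*((w:ℕ):ℝ)) = ((X:ℝ)^w)^2 := by
        rw [show 2*((w:ℕ):ℝ) = ((2*w : ℕ):ℝ) by push_cast; ring, Real.rpow_natCast,
          pow_mul']
      rw [e1, e2, Real.rpow_one]
    calc (k:ℝ)^k * ((((3*2^k)^k : ℕ):ℝ)^2 * ((X:ℝ)^w)^2 * (2*(X:ℝ)) *
          ((2*Cd*(C4:ℝ)^δ)^k * (X:ℝ)^ε))
        = (((k:ℝ)^k * (((3*2^k)^k : ℕ):ℝ)^2 * 2) * (2*Cd*(C4:ℝ)^δ)^k) *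
          (((X:ℝ)^w)^2 * (X:ℝ) * (X:ℝ)^ε) := by ring
      _ = _ := by rw [hx2w]
  rw [← hfinal]
  rw [hDBk] at hchain
  exact hchain
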